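/- arXiv:1904.01005 — 3 statements merged into one kernel-verified Lean document; each statement's English description precedes it below -/
import Mathlib

section
/- The trilinear bracket [·,·,·] on A satisfies the Leibniz rule with respect to the commutative product: for all x1, x2, y2, y3 ∈ A, [x1 · x2, y2, y3] = [x1, y2, y3] · x2 + x1 · [x2, y2, y3]. Together with the Fundamental Identity this makes (A, ·, [·,·,·]) a unital 3-Lie Poisson algebra with unit L_{0,0}^0. -/
noncomputable section

/-- The half-integers `½ℤ = {k/2 : k ∈ ℤ}` as an additive subgroup of `ℚ`. -/
def HalfInt : AddSubgroup ℚ where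
  carrier := {q | ∃ k : ℤ, q = k / 2}
  add_mem' := by rintro a b ⟨k, rfl⟩ ⟨j, rfl⟩; exact ⟨k + j, by push_cast; ring⟩
  zero_mem' := ⟨0, by norm_num⟩
  neg_mem' := by rintro a ⟨k, rfl⟩; exact ⟨-k, by push_cast; ring⟩

/-- The half-integer `k/2`. -/
def hh (k : ℤ) : HalfInt := ⟨(k : ℚ) / 2, ⟨k, rfl⟩⟩

variable (F : Type*) [Field F] [CharZero F]

/-- `A` is the group algebra of `(½ℤ)³` over `F`; the basis element indexed by
`(l, m, r)` is `L_{l,m}^r`. -/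
abbrev A := AddMonoidAlgebra F (HalfInt × HalfInt × HalfInt)

/-- The basis element `L_{l,m}^r` of `A`. -/
def L (l m r : HalfInt) : A F := AddMonoidAlgebra.single (l, m, r) 1

/-- `M(α₁,α₂,α₃)`: the determinant of the 3×3 matrix with rows `(r₁,r₂,r₃)`,
`(l₁,l₂,l₃)`, `(m₁,m₂,m₃)`, computed in `ℚ` and mapped into `F`.
Here an index `α = (l, m, r)`. -/
def Mdet (α β γ : HalfInt × HalfInt × HalfInt) : F :=
  ((Matrix.det !![(α.2.2 : ℚ), (β.2.2 : ℚ), (γ.2.2 : ℚ);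
                  (α.1 : ℚ),   (β.1 : ℚ),   (γ.1 : ℚ);
                  (α.2.1 : ℚ), (β.2.1 : ℚ), (γ.2.1 : ℚ)] : ℚ) : F)

/-- The shift `ν = (1, 1, 0)` (in coordinates `(l, m, r)`). -/
def nu : HalfInt × HalfInt × HalfInt := (hh 2, hh 2, hh 0)

/-- The alternating trilinear bracket on `A`, determined on basis elements by
`[L_{l₁,m₁}^{r₁}, L_{l₂,m₂}^{r₂}, L_{l₃,m₃}^{r₃}]
  = M(α₁,α₂,α₃) · L_{l₁+l₂+l₃-1, m₁+m₂+m₃-1}^{r₁+r₂+r₃}`. -/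
def bracket (x y z : A F) : A F :=
  Finsupp.sum x.coeff fun α a => Finsupp.sum y.coeff fun β b => Finsupp.sum z.coeff fun γ c =>
    AddMonoidAlgebra.single (α + β + γ - nu) (a * b * c * Mdet F α β γ)


-- auxiliary lemmas
lemma Mdet_add_left (F : Type*) [Field F] [CharZero F]
    (α α' β γ : HalfInt × HalfInt × HalfInt) :
    Mdet F (α + α') β γ = Mdet F α β γ + Mdet F α' β γ := by
  simp only [Mdet, Prod.fst_add, Prod.snd_add, AddSubgroup.coe_add, Matrix.det_fin_three]
  simp only [Matrix.cons_val', Matrix.cons_val_zero, Matrix.cons_val_one, Matrix.head_cons,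
    Matrix.empty_val', Matrix.cons_val_fin_one, Matrix.head_fin_const, Matrix.cons_val_two,
    Matrix.tail_cons, Matrix.of_apply]
  push_cast
  ring

lemma inner_zero (F : Type*) [Field F] [CharZero F] (y z : A F)
    (α : HalfInt × HalfInt × HalfInt) :
    (Finsupp.sum y.coeff fun β b => Finsupp.sum z.coeff fun γ c =>
      AddMonoidAlgebra.single (α + β + γ - nu) ((0:F) * b * c * Mdet F α β γ)) = 0 := by
  simp

lemma bracket_zero_left (F : Type*) [Field F] [CharZero F] (y z : A F) :
    bracket F 0 y z = 0 := by
  unfold bracket; exact Finsupp.sum_zero_index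

lemma bracket_add_left (F : Type*) [Field F] [CharZero F] (x x' y z : A F) :
    bracket F (x + x') y z = bracket F x y z + bracket F x' y z := by
  unfold bracket
  rw [AddMonoidAlgebra.coeff_add]
  rw [Finsupp.sum_add_index']
  · intro α; exact inner_zero F y z α
  · intro α a a'
    rw [← Finsupp.sum_add]
    apply Finsupp.sum_congr
    intro β _
    rw [← Finsupp.sum_add]
    apply Finsupp.sum_congr
    intro γ _
    rw [← AddMonoidAlgebra.single_add]
    congr 1; ring

lemma bracket_single (F : Type*) [Field F] [CharZero F]
    (δ : HalfInt × HalfInt × HalfInt) (d : F) (y z : A F) :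
    bracket F (AddMonoidAlgebra.single δ d) y z =
      Finsupp.sum y.coeff fun β b => Finsupp.sum z.coeff fun γ c =>
        AddMonoidAlgebra.single (δ + β + γ - nu) (d * b * c * Mdet F δ β γ) := by
  unfold bracket
  exact Finsupp.sum_single_index (inner_zero F y z δ)

/-- the bracket satisfies the Leibniz rule with respect to the
commutative product, and `L_{0,0}^0` is the unit of `(A, ·)`; hence
`(A, ·, [·,·,·])` is a unital 3-Lie Poisson algebra. -/
theorem leibniz_rule_and_unital :
    (∀ x1 x2 y2 y3 : A F,
        bracket F (x1 * x2) y2 y3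
          = bracket F x1 y2 y3 * x2 + x1 * bracket F x2 y2 y3)
      ∧ L F (hh 0) (hh 0) (hh 0) = (1 : A F) := by
  constructor
  · intro x1 x2 y z
    induction x1 using AddMonoidAlgebra.induction_linear with
    | zero => simp [bracket_zero_left]
    | add f g hf hg =>
        rw [add_mul, bracket_add_left, hf, hg, bracket_add_left, add_mul]
        ring
    | single α a =>
      induction x2 using AddMonoidAlgebra.induction_linear with
      | zero => simp [bracket_zero_left]
      | add f g hf hg =>
          rw [mul_add, bracket_add_left, hf, hg, bracket_add_left, mul_add]
          ring
      | single β b =>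
        show bracket F (AddMonoidAlgebra.single α a * AddMonoidAlgebra.single β b) y z = _
        rw [AddMonoidAlgebra.single_mul_single, bracket_single, bracket_single,
          bracket_single, Finsupp.sum_mul, Finsupp.mul_sum, ← Finsupp.sum_add]
        apply Finsupp.sum_congr
        intro γ _
        rw [Finsupp.sum_mul, Finsupp.mul_sum, ← Finsupp.sum_add]
        apply Finsupp.sum_congr
        intro δ _
        rw [AddMonoidAlgebra.single_mul_single, AddMonoidAlgebra.single_mul_single,
          Mdet_add_left]
        have e1 : α + γ + δ - nu + β = α + β + γ + δ - nu := by abel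
        have e2 : α + (β + γ + δ - nu) = α + β + γ + δ - nu := by abel
        rw [e1, e2, ← AddMonoidAlgebra.single_add]
        congr 1
        ring
  · have h0 : hh 0 = 0 := by apply Subtype.ext; simp [hh]
    rw [L, h0]
    rfl
end
end

section
/- In A, set S_r = L_{0,1}^r and T_r = L_{1,0}^{−r} for r ∈ ℤ. Then the family {S_r, T_r : r ∈ ℤ} is linearly independent and for all l, m, n ∈ ℤ: [S_l, S_m, S_n] = 0; [T_l, T_m, T_n] = 0; [S_l, S_m, T_n] = (m−l) S_{l+m−n}; [S_l, T_m, T_n] = (n−m) T_{m+n−l}. Hence the 3-Lie algebra A_ω^δ embeds into the 3-Lie algebra (A, [·,·,·]). -/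
noncomputable section

variable (F : Type*) [Field F] [CharZero F]

variable {F}

/-- `S_r = L_{0,1}^r`. -/
def S5 (F : Type*) [Field F] [CharZero F] (r : ℤ) : A F := L F (hh 0) (hh 2) (hh (2 * r))

/-- `T_r = L_{1,0}^{−r}`. -/
def T5 (F : Type*) [Field F] [CharZero F] (r : ℤ) : A F := L F (hh 2) (hh 0) (hh (-(2 * r)))

-- aux lemmas
lemma hh_inj : Function.Injective hh := by
  intro a b h
  have : (a : ℚ) / 2 = (b : ℚ) / 2 := congrArg Subtype.val h
  have h2 : (a : ℚ) = b := by linarith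
  exact_mod_cast h2
lemma hh_add (a b : ℤ) : hh a + hh b = hh (a + b) := by
  apply Subtype.ext
  show (a : ℚ)/2 + (b : ℚ)/2 = ((a + b : ℤ) : ℚ)/2
  push_cast; ring
lemma hh_sub (a b : ℤ) : hh a - hh b = hh (a - b) := by
  apply Subtype.ext
  show (a : ℚ)/2 - (b : ℚ)/2 = ((a - b : ℤ) : ℚ)/2
  push_cast; ring
lemma hh_val (a : ℤ) : ((hh a : HalfInt) : ℚ) = a / 2 := rfl

lemma bracket_single_s5 (α β γ : HalfInt × HalfInt × HalfInt) :
    bracket F (AddMonoidAlgebra.single α 1) (AddMonoidAlgebra.single β 1)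
      (AddMonoidAlgebra.single γ 1)
    = AddMonoidAlgebra.single (α + β + γ - nu) (Mdet F α β γ) := by
  unfold bracket
  simp only [AddMonoidAlgebra.coeff_single]
  rw [Finsupp.sum_single_index (by simp), Finsupp.sum_single_index (by simp),
    Finsupp.sum_single_index (by simp)]
  simp

lemma hh_ne : hh 0 ≠ hh 2 := by
  intro h
  have := hh_inj h
  omega

def idx : ℤ ⊕ ℤ → HalfInt × HalfInt × HalfInt :=
  Sum.elim (fun r => (hh 0, hh 2, hh (2*r))) (fun r => (hh 2, hh 0, hh (-(2*r))))

lemma idx_inj : Function.Injective idx := by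
  rintro (a|a) (b|b) h <;> simp only [idx, Sum.elim_inl, Sum.elim_inr, Prod.mk.injEq] at h
  · exact congrArg Sum.inl (by have := hh_inj h.2.2; omega)
  · exact absurd (hh_inj h.1) (by norm_num)
  · exact absurd (hh_inj h.1) (by norm_num)
  · exact congrArg Sum.inr (by have := hh_inj h.2.2; omega)

lemma SST (l m n : ℤ) : bracket F (S5 F l) (S5 F m) (T5 F n)
    = ((m - l : ℤ) : F) • S5 F (l + m - n) := by
  simp only [S5, S5, T5, L]
  rw [bracket_single_s5]
  have hidx : ((hh 0, hh 2, hh (2*l)) + (hh 0, hh 2, hh (2*m)) + (hh 2, hh 0, hh (-(2*n))) - nu :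
      HalfInt × HalfInt × HalfInt) = (hh 0, hh 2, hh (2*(l+m-n))) := by
    simp only [nu, Prod.mk_add_mk, Prod.mk_sub_mk, hh_add, hh_sub, Prod.mk.injEq]
    exact ⟨congrArg hh (by ring), congrArg hh (by ring), congrArg hh (by ring)⟩
  have hdet : Mdet F (hh 0, hh 2, hh (2*l)) (hh 0, hh 2, hh (2*m)) (hh 2, hh 0, hh (-(2*n)))
      = ((m - l : ℤ) : F) := by
    rw [Mdet]
    norm_num [Matrix.det_fin_three, hh_val]
    push_cast
    ring
  rw [hidx, hdet, AddMonoidAlgebra.smul_single']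
  norm_num

lemma STT (l m n : ℤ) : bracket F (S5 F l) (T5 F m) (T5 F n)
    = ((n - m : ℤ) : F) • T5 F (m + n - l) := by
  simp only [S5, T5, T5, L]
  rw [bracket_single_s5]
  have hidx : ((hh 0, hh 2, hh (2*l)) + (hh 2, hh 0, hh (-(2*m))) + (hh 2, hh 0, hh (-(2*n))) - nu :
      HalfInt × HalfInt × HalfInt) = (hh 2, hh 0, hh (-(2*(m+n-l)))) := by
    simp only [nu, Prod.mk_add_mk, Prod.mk_sub_mk, hh_add, hh_sub, Prod.mk.injEq]
    exact ⟨congrArg hh (by ring), congrArg hh (by ring), congrArg hh (by ring)⟩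
  have hdet : Mdet F (hh 0, hh 2, hh (2*l)) (hh 2, hh 0, hh (-(2*m))) (hh 2, hh 0, hh (-(2*n)))
      = ((n - m : ℤ) : F) := by
    rw [Mdet]
    norm_num [Matrix.det_fin_three, hh_val]
    push_cast
    ring
  rw [hidx, hdet, AddMonoidAlgebra.smul_single']
  norm_num

lemma SSS (l m n : ℤ) : bracket F (S5 F l) (S5 F m) (S5 F n) = 0 := by
  simp only [S5, S5, S5, L]
  rw [bracket_single_s5]
  have hdet : Mdet F (hh 0, hh 2, hh (2*l)) (hh 0, hh 2, hh (2*m)) (hh 0, hh 2, hh (2*n))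
      = 0 := by
    rw [Mdet]
    norm_num [Matrix.det_fin_three, hh_val]
    simp [Matrix.cons_val]
  rw [hdet]
  simp

lemma TTT (l m n : ℤ) : bracket F (T5 F l) (T5 F m) (T5 F n) = 0 := by
  simp only [T5, T5, T5, L]
  rw [bracket_single_s5]
  have hdet : Mdet F (hh 2, hh 0, hh (-(2*l))) (hh 2, hh 0, hh (-(2*m))) (hh 2, hh 0, hh (-(2*n)))
      = 0 := by
    rw [Mdet]
    norm_num [Matrix.det_fin_three, hh_val]
    simp [Matrix.cons_val]
  rw [hdet]
  simp

lemma lin_ind : LinearIndependent F (fun s : ℤ ⊕ ℤ => Sum.elim (S5 F) (T5 F) s) := by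
  have h := (AddMonoidAlgebra.basis
    (HalfInt × HalfInt × HalfInt) F).linearIndependent.comp idx idx_inj
  have he : (fun s : ℤ ⊕ ℤ => Sum.elim (S5 F) (T5 F) s)
      = fun s => AddMonoidAlgebra.single (idx s) (1 : F) := by
    funext s; cases s <;> rfl
  rw [he]
  exact h


/-- the family `{S_r, T_r : r ∈ ℤ}` is linearly independent and
satisfies the multiplication table of the 3-Lie algebra `A_ω^δ`; hence `A_ω^δ`
embeds into the 3-Lie algebra `(A, [·,·,·])`. -/
theorem Aomegadelta_embeds (F : Type*) [Field F] [CharZero F] :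
    LinearIndependent F (fun s : ℤ ⊕ ℤ => Sum.elim (S5 F) (T5 F) s)
      ∧ (∀ l m n : ℤ, bracket F (S5 F l) (S5 F m) (S5 F n) = 0)
      ∧ (∀ l m n : ℤ, bracket F (T5 F l) (T5 F m) (T5 F n) = 0)
      ∧ (∀ l m n : ℤ, bracket F (S5 F l) (S5 F m) (T5 F n)
          = ((m - l : ℤ) : F) • S5 F (l + m - n))
      ∧ (∀ l m n : ℤ, bracket F (S5 F l) (T5 F m) (T5 F n)
          = ((n - m : ℤ) : F) • T5 F (m + n - l)) :=
  ⟨lin_ind, SSS, TTT, SST, STT⟩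
end
end

section
/- For all x, y ∈ A, the left multiplication ad(x,y) : A → A, z ↦ [x, y, z], is simultaneously a derivation of the associative product (ad(x,y)(a·b) = ad(x,y)(a)·b + a·ad(x,y)(b) for all a, b ∈ A) and a derivation of the 3-bracket (ad(x,y)([a,b,c]) = [ad(x,y)(a), b, c] + [a, ad(x,y)(b), c] + [a, b, ad(x,y)(c)] for all a, b, c ∈ A). Hence left multiplications are derivations of the 3-Lie Poisson algebra A. -/
noncomputable section

variable (F : Type*) [Field F] [CharZero F]

set_option linter.unusedSectionVars false

lemma hh2 : ((hh 2 : HalfInt) : ℚ) = 1 := by norm_num [hh]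
lemma hh0 : ((hh 0 : HalfInt) : ℚ) = 0 := by norm_num [hh]

lemma Mdet_expand (α β γ : HalfInt × HalfInt × HalfInt) :
    Mdet F α β γ = (((α.2.2 : ℚ) * (β.1 : ℚ) * (γ.2.1 : ℚ)
      - (α.2.2 : ℚ) * (β.2.1 : ℚ) * (γ.1 : ℚ)
      - (β.2.2 : ℚ) * (α.1 : ℚ) * (γ.2.1 : ℚ)
      + (β.2.2 : ℚ) * (α.2.1 : ℚ) * (γ.1 : ℚ)
      + (γ.2.2 : ℚ) * (α.1 : ℚ) * (β.2.1 : ℚ)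
      - (γ.2.2 : ℚ) * (α.2.1 : ℚ) * (β.1 : ℚ) : ℚ) : F) := by
  rw [Mdet, Matrix.det_fin_three]
  norm_num [Matrix.cons_val_zero, Matrix.cons_val_one, Matrix.head_cons,
    Matrix.cons_val_two, Matrix.tail_cons]
  ring_nf

lemma key1 (α β γ δ : HalfInt × HalfInt × HalfInt) :
    Mdet F α β (γ + δ) = Mdet F α β γ + Mdet F α β δ := by
  simp only [Mdet_expand, Prod.fst_add, Prod.snd_add, AddSubgroup.coe_add]
  push_cast
  ring

lemma key2 (ξ η α β γ : HalfInt × HalfInt × HalfInt) :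
    Mdet F α β γ * Mdet F ξ η (α + β + γ - nu)
      = Mdet F ξ η α * Mdet F (ξ + η + α - nu) β γ
        + Mdet F ξ η β * Mdet F α (ξ + η + β - nu) γ
        + Mdet F ξ η γ * Mdet F α β (ξ + η + γ - nu) := by
  simp only [Mdet_expand, nu, Prod.fst_add, Prod.snd_add, Prod.fst_sub, Prod.snd_sub,
    AddSubgroup.coe_add, AddSubgroup.coe_sub, hh2, hh0]
  push_cast
  ring

lemma bracket_single3 (α β γ : HalfInt × HalfInt × HalfInt) (a b c : F) :
    bracket F (AddMonoidAlgebra.single α a) (AddMonoidAlgebra.single β b)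
        (AddMonoidAlgebra.single γ c)
      = AddMonoidAlgebra.single (α + β + γ - nu) (a * b * c * Mdet F α β γ) := by
  unfold bracket
  simp only [AddMonoidAlgebra.coeff_single]
  rw [Finsupp.sum_single_index, Finsupp.sum_single_index, Finsupp.sum_single_index] <;>
    simp [Finsupp.sum_single_index]

lemma bracket_zero1 (y z : A F) : bracket F 0 y z = 0 := by
  simp [bracket]

lemma bracket_zero2 (x z : A F) : bracket F x 0 z = 0 := by
  simp [bracket]

lemma bracket_zero3 (x y : A F) : bracket F x y 0 = 0 := by
  simp [bracket]

lemma bracket_add1 (x x' y z : A F) :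
    bracket F (x + x') y z = bracket F x y z + bracket F x' y z := by
  unfold bracket
  rw [AddMonoidAlgebra.coeff_add]
  rw [Finsupp.sum_add_index'] <;>
    simp [add_mul, Finsupp.single_add, Finsupp.sum_add]

lemma bracket_add2 (x y y' z : A F) :
    bracket F x (y + y') z = bracket F x y z + bracket F x y' z := by
  unfold bracket
  rw [← Finsupp.sum_add]
  apply Finsupp.sum_congr
  intro α _
  rw [AddMonoidAlgebra.coeff_add]
  rw [Finsupp.sum_add_index'] <;>
    simp [mul_add, add_mul, Finsupp.single_add, Finsupp.sum_add]

lemma bracket_add3 (x y z z' : A F) :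
    bracket F x y (z + z') = bracket F x y z + bracket F x y z' := by
  unfold bracket
  rw [← Finsupp.sum_add]
  apply Finsupp.sum_congr
  intro α _
  rw [← Finsupp.sum_add]
  apply Finsupp.sum_congr
  intro β _
  rw [AddMonoidAlgebra.coeff_add]
  rw [Finsupp.sum_add_index'] <;>
    simp [mul_add, add_mul, Finsupp.single_add, Finsupp.sum_add]

lemma myInd {p : A F → Prop} (h0 : p 0) (hadd : ∀ f g : A F, p f → p g → p (f + g))
    (hs : ∀ (α : HalfInt × HalfInt × HalfInt) (a : F), p (AddMonoidAlgebra.single α a)) :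
    ∀ f : A F, p f := fun f => AddMonoidAlgebra.induction_linear f h0 (hadd · ·) hs

lemma single_mul (α β : HalfInt × HalfInt × HalfInt) (a b : F) :
    (AddMonoidAlgebra.single α a * AddMonoidAlgebra.single β b : A F)
      = AddMonoidAlgebra.single (α + β) (a * b) := AddMonoidAlgebra.single_mul_single _ _ _ _

lemma leibniz (x y a b : A F) :
    bracket F x y (a * b) = bracket F x y a * b + a * bracket F x y b := by
  induction x using myInd with
  | h0 => simp [bracket_zero1]
  | hadd p q hp hq => rw [bracket_add1, bracket_add1, bracket_add1, hp, hq]; ring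
  | hs ξ u =>
  induction y using myInd with
  | h0 => simp [bracket_zero2]
  | hadd p q hp hq => rw [bracket_add2, bracket_add2, bracket_add2, hp, hq]; ring
  | hs η v =>
  induction a using myInd with
  | h0 => simp [bracket_zero3]
  | hadd p q hp hq => rw [add_mul, bracket_add3, bracket_add3, hp, hq]; ring
  | hs α a =>
  induction b using myInd with
  | h0 => simp [bracket_zero3]
  | hadd p q hp hq => rw [mul_add, bracket_add3, bracket_add3, hp, hq]; ring
  | hs β b =>
    rw [single_mul, bracket_single3, bracket_single3, bracket_single3,
      single_mul, single_mul, key1,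
      show (ξ + η + α - nu) + β = ξ + η + (α + β) - nu by abel,
      show α + (ξ + η + β - nu) = ξ + η + (α + β) - nu by abel,
      ← AddMonoidAlgebra.single_add]
    congr 1
    ring

lemma fundamental (x y a b c : A F) :
    bracket F x y (bracket F a b c)
      = bracket F (bracket F x y a) b c + bracket F a (bracket F x y b) c
        + bracket F a b (bracket F x y c) := by
  induction x using myInd with
  | h0 => simp [bracket_zero1, bracket_zero2, bracket_zero3]
  | hadd p q hp hq =>
      simp only [bracket_add1, bracket_add2, bracket_add3, hp, hq]; abel
  | hs ξ u =>
  induction y using myInd with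
  | h0 => simp [bracket_zero1, bracket_zero2, bracket_zero3]
  | hadd p q hp hq =>
      simp only [bracket_add1, bracket_add2, bracket_add3, hp, hq]; abel
  | hs η v =>
  induction a using myInd with
  | h0 => simp [bracket_zero1, bracket_zero2, bracket_zero3]
  | hadd p q hp hq =>
      simp only [bracket_add1, bracket_add2, bracket_add3, hp, hq]; abel
  | hs α a =>
  induction b using myInd with
  | h0 => simp [bracket_zero1, bracket_zero2, bracket_zero3]
  | hadd p q hp hq =>
      simp only [bracket_add1, bracket_add2, bracket_add3, hp, hq]; abel
  | hs β b =>
  induction c using myInd with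
  | h0 => simp [bracket_zero1, bracket_zero2, bracket_zero3]
  | hadd p q hp hq =>
      simp only [bracket_add1, bracket_add2, bracket_add3, hp, hq]; abel
  | hs γ c =>
    rw [bracket_single3, bracket_single3, bracket_single3, bracket_single3, bracket_single3,
      bracket_single3, bracket_single3, bracket_single3,
      show (ξ + η + α - nu) + β + γ - nu = ξ + η + (α + β + γ - nu) - nu by abel,
      show α + (ξ + η + β - nu) + γ - nu = ξ + η + (α + β + γ - nu) - nu by abel,
      show α + β + (ξ + η + γ - nu) - nu = ξ + η + (α + β + γ - nu) - nu by abel,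
      ← AddMonoidAlgebra.single_add, ← AddMonoidAlgebra.single_add]
    congr 1
    linear_combination (u * v * a * b * c) * key2 F ξ η α β γ

/-- for all `x, y ∈ A`, the left multiplication
`ad(x,y) : z ↦ [x, y, z]` is a derivation both of the associative product and of
the 3-bracket; hence left multiplications are derivations of the 3-Lie Poisson
algebra `A`. -/
theorem ad_is_derivation (x y : A F) :
    (∀ a b : A F,
        bracket F x y (a * b) = bracket F x y a * b + a * bracket F x y b)
      ∧ (∀ a b c : A F,
          bracket F x y (bracket F a b c)
            = bracket F (bracket F x y a) b c + bracket F a (bracket F x y b) c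
              + bracket F a b (bracket F x y c)) :=
  ⟨fun a b => leibniz F x y a b, fun a b c => fundamental F x y a b c⟩
end
end
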